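/- arXiv:1711.03811 — 4 statements merged into one kernel-verified Lean document; each statement's English description precedes it below -/
import Mathlib

section
/- Let O be a discrete valuation ring with fraction field K and normalized valuation v : Kˣ → ℤ, and for x ∈ K^n \ {0} set v(x) = min_{1≤j≤n} v(x_j). If x, y ∈ K^n \ {0} satisfy v(x) = v(y), then there exists g ∈ GL_n(O) such that g·x = y; that is, GL_n(O) acts transitively on each valuative sphere S(0,i) = {x ∈ K^n \ {0} : v(x) = i}. -/
/-- The minimum of the coordinate valuations of a vector `x ∈ K^n`
(with value `⊤` for `x = 0`). -/
def vmin {K : Type*} (v : K → WithTop ℤ) {n : ℕ} (x : Fin n → K) : WithTop ℤ :=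
  Finset.univ.inf fun j => v (x j)

/-- Let `K` be a field with a surjective normalized discrete valuation `v`
(equivalently, `K` is the fraction field of a DVR `O = {a : 0 ≤ v a}`). If two nonzero
vectors `x, y ∈ K^n` satisfy `v(x) = v(y)` (minimum of coordinate valuations), then there is
`g ∈ GL_n(O)` (entries in `O`, determinant a unit of `O`) with `g·x = y`; i.e. `GL_n(O)` acts
transitively on each valuative sphere `S(0,i)`. -/
theorem exists_GL_integral_mulVec_eq_of_vmin_eq {K : Type*} [Field K] (v : K → WithTop ℤ)
    (hv0 : ∀ a : K, v a = ⊤ ↔ a = 0)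
    (hvmul : ∀ a b : K, v (a * b) = v a + v b)
    (hvadd : ∀ a b : K, min (v a) (v b) ≤ v (a + b))
    (hvsurj : ∀ m : ℤ, ∃ a : K, v a = (m : WithTop ℤ))
    (n : ℕ) (x y : Fin n → K) (hx : x ≠ 0) (hy : y ≠ 0)
    (hxy : vmin v x = vmin v y) :
    ∃ g : Matrix (Fin n) (Fin n) K,
      (∀ i j, 0 ≤ v (g i j)) ∧ v g.det = 0 ∧ g.mulVec x = y := by
  classical
  -- basic facts about v
  have hvz : v 0 = ⊤ := (hv0 0).mpr rfl
  have hv1 : v 1 = 0 := by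
    have h := hvmul 1 1
    rw [one_mul] at h
    have h1t : v 1 ≠ ⊤ := fun ht => one_ne_zero ((hv0 1).mp ht)
    lift v 1 to ℤ using h1t with a ha
    rw [← WithTop.coe_add, WithTop.coe_inj] at h
    have : a = 0 := by omega
    simp [this]
  have hvm1 : v (-1 : K) = 0 := by
    have h := hvmul (-1) (-1)
    rw [neg_mul_neg, one_mul, hv1] at h
    have h1t : v (-1 : K) ≠ ⊤ := fun ht => by
      have := (hv0 (-1)).mp ht; norm_num at this
    lift v (-1 : K) to ℤ using h1t with a ha
    rw [← WithTop.coe_add] at h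
    have h2 : a + a = 0 := by exact_mod_cast h.symm
    have : a = 0 := by omega
    simp [this]
  have hvneg : ∀ a : K, v (-a) = v a := by
    intro a
    have := hvmul (-1) a
    rw [neg_one_mul, hvm1, zero_add] at this
    exact this
  have hvs : ∀ u : ℤˣ, v (((u : ℤ) : K)) = 0 := by
    intro u
    rcases Int.units_eq_one_or u with h | h <;> rw [h] <;> simp [hv1, hvm1]
  have hvsum : ∀ (s : Finset (Fin n)) (f : Fin n → K),
      (∀ i ∈ s, 0 ≤ v (f i)) → 0 ≤ v (∑ i ∈ s, f i) := by
    intro s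
    induction s using Finset.induction_on with
    | empty => intro f _; simp [hvz]
    | @insert a s ha ih =>
      intro f hf
      rw [Finset.sum_insert ha]
      refine le_trans (le_min (hf a (Finset.mem_insert_self a s))
        (ih f fun i hi => hf i (Finset.mem_insert_of_mem hi))) (hvadd _ _)
  -- dispose of n = 0
  rcases n with _ | n
  · exact absurd (funext fun i => i.elim0) hx
  -- choose minimal coordinates
  obtain ⟨i0, -, hi0⟩ := Finset.exists_mem_eq_inf (Finset.univ : Finset (Fin (n + 1)))
    Finset.univ_nonempty (fun j => v (x j))
  obtain ⟨j0, -, hj0⟩ := Finset.exists_mem_eq_inf (Finset.univ : Finset (Fin (n + 1)))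
    Finset.univ_nonempty (fun j => v (y j))
  set c := x i0 with hc
  have hminx : vmin v x = v c := hi0
  have hminy : vmin v y = v (y j0) := hj0
  have hvyc : v (y j0) = v c := by rw [← hminy, ← hxy, hminx]
  have hcx : ∀ j, v c ≤ v (x j) := by
    intro j
    rw [← hminx]
    exact Finset.inf_le (Finset.mem_univ j)
  have hcy : ∀ j, v c ≤ v (y j) := by
    intro j
    have : vmin v y ≤ v (y j) := Finset.inf_le (Finset.mem_univ j)
    rw [← hxy, hminx] at this
    exact this
  have hc0 : c ≠ 0 := by
    intro h
    obtain ⟨j, hj⟩ := Function.ne_iff.mp hx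
    have : v (x j) = ⊤ := top_le_iff.mp (by
      have := hcx j
      rw [h, hvz] at this; exact this)
    exact hj ((hv0 _).mp this)
  have hvcinv : v c + v c⁻¹ = 0 := by
    have := hvmul c c⁻¹
    rw [mul_inv_cancel₀ hc0, hv1] at this
    exact this.symm
  have hO : ∀ a : K, v c ≤ v a → 0 ≤ v (a * c⁻¹) := by
    intro a ha
    rw [hvmul]
    calc (0 : WithTop ℤ) = v c + v c⁻¹ := hvcinv.symm
      _ ≤ v a + v c⁻¹ := add_le_add ha le_rfl
  -- the permutations
  set σ := Equiv.swap (0 : Fin (n + 1)) i0 with hσ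
  set τ := Equiv.swap (0 : Fin (n + 1)) j0 with hτ
  -- matrices
  set L : Matrix (Fin (n + 1)) (Fin (n + 1)) K :=
    fun i j => if j = i then 1 else if j = 0 then -(x (σ i) * c⁻¹) else 0 with hL
  set M : Matrix (Fin (n + 1)) (Fin (n + 1)) K :=
    fun i j => if j = 0 then y (τ i) * c⁻¹ else if j = i then 1 else 0 with hM
  set G := L.submatrix id σ with hG
  set H := M.submatrix τ id with hH
  refine ⟨H * G, ?_, ?_, ?_⟩
  · -- integral entries
    intro i j
    rw [Matrix.mul_apply]
    apply hvsum
    intro k _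
    rw [hvmul]
    have h1 : 0 ≤ v (H i k) := by
      rw [hH, Matrix.submatrix_apply]; simp only [hM, id]
      split
      · exact hO _ (hcy _)
      · split
        · rw [hv1]
        · rw [hvz]; exact le_top
    have h2 : 0 ≤ v (G k j) := by
      rw [hG, Matrix.submatrix_apply]; simp only [hL, id]
      split
      · rw [hv1]
      · split
        · rw [hvneg]; exact hO _ (hcx _)
        · rw [hvz]; exact le_top
    have := add_le_add h1 h2
    simpa using this
  · -- determinant
    have hdetL : L.det = 1 := by
      rw [Matrix.det_of_lowerTriangular L (by
        intro i j hij
        have hij' : i < j := hij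
        simp only [hL]
        rw [if_neg hij'.ne', if_neg (by
          rintro rfl
          exact absurd hij' (by simp [Fin.not_lt, Fin.zero_le]))])]
      simp [hL]
    have hdetM : M.det = y j0 * c⁻¹ := by
      rw [Matrix.det_of_lowerTriangular M (by
        intro i j hij
        have hij' : i < j := hij
        simp only [hM]
        rw [if_neg (by
          rintro rfl
          exact absurd hij' (by simp [Fin.not_lt, Fin.zero_le])), if_neg hij'.ne'])]
      have hdiag : ∀ i : Fin (n + 1), M i i = if i = 0 then y (τ i) * c⁻¹ else 1 := by
        intro i
        by_cases hi : i = 0 <;> simp [hM, hi]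
      rw [Finset.prod_congr rfl fun i _ => hdiag i, Finset.prod_ite_eq' Finset.univ 0
        (fun i => y (τ i) * c⁻¹)]
      simp [hτ]
    have hdet : (H * G).det = ((Equiv.Perm.sign τ : ℤ) : K) *
        (((Equiv.Perm.sign σ : ℤ) : K) * (y j0 * c⁻¹)) := by
      rw [Matrix.det_mul, hH, hG, Matrix.det_permute, Matrix.det_permute', hdetL, hdetM]
      ring
    rw [hdet, hvmul, hvmul, hvs, hvs, hvmul, hvyc, hvcinv]
    simp
  · -- mulVec
    have hGx : G.mulVec x = fun i => if i = 0 then c else 0 := by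
      funext i
      rw [Matrix.mulVec, dotProduct]
      have hchange : ∑ j, G i j * x j = ∑ j, L i j * x (σ j) := by
        apply Fintype.sum_equiv σ
        intro j
        simp [hG, hσ, Equiv.swap_apply_self]
      rw [hchange]
      by_cases hi : i = 0
      · subst hi
        have h0 : ∀ j, L 0 j * x (σ j) = if j = 0 then x (σ j) else 0 := by
          intro j
          by_cases hj : j = 0 <;> simp [hL, hj]
        rw [Finset.sum_congr rfl fun j _ => h0 j, Finset.sum_ite_eq' Finset.univ 0
          (fun j => x (σ j))]
        simp [hσ, hc]
      · rw [if_neg hi]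
        have hsplit : ∀ j, L i j * x (σ j) =
            (if j = i then x (σ j) else 0)
              + (if j = 0 then -(x (σ i) * c⁻¹) * x (σ j) else 0) := by
          intro j
          by_cases hj0 : j = 0
          · subst hj0
            simp [hL, Ne.symm hi]
          · by_cases hj : j = i
            · subst hj
              simp [hL, hj0]
            · simp [hL, hj, hj0]
        rw [Finset.sum_congr rfl fun j _ => hsplit j, Finset.sum_add_distrib,
          Finset.sum_ite_eq' Finset.univ i (fun j => x (σ j)),
          Finset.sum_ite_eq' Finset.univ 0 (fun j => -(x (σ i) * c⁻¹) * x (σ j))]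
        simp only [Finset.mem_univ, if_true]
        rw [show σ 0 = i0 from Equiv.swap_apply_left 0 i0]
        rw [← hc]
        field_simp
        ring
    have hcomp : (H * G).mulVec x = H.mulVec (G.mulVec x) := (Matrix.mulVec_mulVec _ _ _).symm
    rw [hcomp, hGx]
    funext i
    rw [Matrix.mulVec, dotProduct]
    have hterm : ∀ j : Fin (n + 1), H i j * (if j = 0 then c else 0) =
        if j = 0 then M (τ i) j * c else 0 := by
      intro j
      by_cases hj : j = 0 <;> simp [hj, hH]
    rw [Finset.sum_congr rfl fun j _ => hterm j, Finset.sum_ite_eq' Finset.univ 0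
      (fun j => M (τ i) j * c)]
    simp only [Finset.mem_univ, if_true, hM, if_pos rfl]
    rw [Equiv.swap_apply_self]
    field_simp
end

section
/- Let O be a discrete valuation ring with fraction field K, and let V be a d-dimensional K-linear subspace of K^n (0 ≤ d ≤ n). Then there exists g ∈ GL_n(O) such that g(K^d × {0}^{n−d}) = V; that is, GL_n(O) acts transitively on the set of d-dimensional subspaces of K^n. -/
section aux
variable {K : Type*} [Field K] (v : K → WithTop ℤ)

section basic
variable (hv0 : ∀ a : K, v a = ⊤ ↔ a = 0)
    (hvmul : ∀ a b : K, v (a * b) = v a + v b)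
    (hvadd : ∀ a b : K, min (v a) (v b) ≤ v (a + b))

include hv0 hvmul in
theorem hv_one : v 1 = 0 := by
  have h := hvmul 1 1
  rw [mul_one] at h
  have h1 : v 1 ≠ ⊤ := by simp [hv0]
  lift v 1 to ℤ using h1 with a
  norm_cast at h ⊢
  omega

include hv0 hvmul in
theorem hv_neg (a : K) : v (-a) = v a := by
  have hm1 : v (-1 : K) = 0 := by
    have h := hvmul (-1) (-1)
    rw [neg_mul_neg, one_mul, hv_one v hv0 hvmul] at h
    have h1 : v (-1 : K) ≠ ⊤ := by simp [hv0]
    lift v (-1 : K) to ℤ using h1 with b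
    norm_cast at h ⊢
    omega
  have := hvmul (-1) a
  rw [neg_one_mul, hm1, zero_add] at this
  exact this

include hv0 hvmul in
theorem hv_inv (a : K) (ha : a ≠ 0) : v a⁻¹ = - v a := by
  have h := hvmul a a⁻¹
  rw [mul_inv_cancel₀ ha, hv_one v hv0 hvmul] at h
  have h1 : v a ≠ ⊤ := by simp [hv0, ha]
  have h2 : v a⁻¹ ≠ ⊤ := by simp [hv0, ha]
  lift v a to ℤ using h1 with x
  lift v a⁻¹ to ℤ using h2 with y
  norm_cast at h ⊢
  omega

/-- The valuation subring. -/
def Odef : ValuationSubring K where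
  carrier := {a : K | 0 ≤ v a}
  zero_mem' := by simp [(hv0 0).mpr rfl]
  one_mem' := by simp [hv_one v hv0 hvmul]
  add_mem' := by
    intro a b ha hb
    exact le_trans (le_min ha hb) (hvadd a b)
  mul_mem' := by
    intro a b ha hb
    simp only [Set.mem_setOf_eq, hvmul a b]
    exact add_nonneg ha hb
  neg_mem' := by
    intro a ha
    simpa [hv_neg v hv0 hvmul] using ha
  mem_or_inv_mem' := by
    intro x
    rcases eq_or_ne x 0 with rfl | hx
    · left; simp [(hv0 0).mpr rfl]
    rcases le_or_gt 0 (v x) with h | h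
    · left; exact h
    · right
      simp only [Set.mem_setOf_eq, hv_inv v hv0 hvmul x hx]
      have hx' : v x ≠ ⊤ := by simp [hv0, hx]
      lift v x to ℤ using hx' with t
      norm_cast at h ⊢
      omega

end basic

section pid
variable (hv0 : ∀ a : K, v a = ⊤ ↔ a = 0)
    (hvmul : ∀ a b : K, v (a * b) = v a + v b)
    (hvadd : ∀ a b : K, min (v a) (v b) ≤ v (a + b))

include hv0 hvmul hvadd in
theorem Odef_pid : IsPrincipalIdealRing (Odef v hv0 hvmul hvadd) := by
  set O := Odef v hv0 hvmul hvadd with hO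
  constructor
  intro I
  by_cases hI : I = ⊥
  · exact ⟨⟨0, by rw [hI, Submodule.span_zero_singleton]⟩⟩
  obtain ⟨x, hxI, hx0⟩ := Submodule.exists_mem_ne_zero_of_ne_bot hI
  -- the set of valuations of nonzero elements of I
  have hvnat : ∀ y : O, y ≠ 0 → ∃ m : ℕ, v (y : K) = (m : ℤ) := by
    intro y hy
    have h1 : v (y : K) ≠ ⊤ := by
      simp only [hv0, ne_eq, ZeroMemClass.coe_eq_zero]
      exact hy
    have h2 : 0 ≤ v (y : K) := y.2
    lift v (y : K) to ℤ using h1 with t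
    norm_cast at h2 ⊢
    exact ⟨t.toNat, by omega⟩
  set S : Set ℕ := {m | ∃ y ∈ I, y ≠ 0 ∧ v ((y : O) : K) = (m : ℤ)} with hS
  have hSne : S.Nonempty := by
    obtain ⟨m, hm⟩ := hvnat x hx0
    exact ⟨m, x, hxI, hx0, hm⟩
  obtain ⟨y₀, hy₀I, hy₀0, hy₀v⟩ := Nat.sInf_mem hSne
  refine ⟨⟨y₀, le_antisymm ?_ ?_⟩⟩
  · intro z hzI
    rcases eq_or_ne z 0 with rfl | hz0
    · exact Submodule.zero_mem _
    obtain ⟨mz, hmz⟩ := hvnat z hz0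
    have hle : sInf S ≤ mz := Nat.sInf_le ⟨z, hzI, hz0, hmz⟩
    have hy₀K : ((y₀ : O) : K) ≠ 0 := by
      simpa [ZeroMemClass.coe_eq_zero] using hy₀0
    set c : K := (z : K) / (y₀ : K) with hc
    have hcz : c * (y₀ : K) = (z : K) := div_mul_cancel₀ _ hy₀K
    have hvc : 0 ≤ v c := by
      have h := hvmul c (y₀ : K)
      rw [hcz, hmz, hy₀v] at h
      have hc0 : c ≠ 0 := by
        rw [hc]
        exact div_ne_zero (by simpa [ZeroMemClass.coe_eq_zero] using hz0) hy₀K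
      have hcT : v c ≠ ⊤ := by simp [hv0, hc0]
      lift v c to ℤ using hcT with t
      norm_cast at h ⊢
      omega
    rw [Submodule.mem_span_singleton]
    refine ⟨⟨c, hvc⟩, ?_⟩
    rw [smul_eq_mul]
    ext
    push_cast
    exact hcz
  · rw [Submodule.span_le, Set.singleton_subset_iff]
    exact hy₀I

end pid
end aux

/-- Let `K` be a field with a surjective normalized discrete valuation `v`
(equivalently, `K` is the fraction field of a DVR `O = {a : 0 ≤ v a}`), and let `V` be a
`d`-dimensional `K`-linear subspace of `K^n` with `0 ≤ d ≤ n`. Then there is `g ∈ GL_n(O)`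
(entries in `O`, determinant a unit of `O`) mapping the coordinate subspace
`K^d × {0}^{n−d}` onto `V`; i.e. `GL_n(O)` acts transitively on the set of `d`-dimensional
subspaces of `K^n`. -/
theorem exists_GL_integral_image_coordSubspace_eq {K : Type*} [Field K] (v : K → WithTop ℤ)
    (hv0 : ∀ a : K, v a = ⊤ ↔ a = 0)
    (hvmul : ∀ a b : K, v (a * b) = v a + v b)
    (hvadd : ∀ a b : K, min (v a) (v b) ≤ v (a + b))
    (hvsurj : ∀ m : ℤ, ∃ a : K, v a = (m : WithTop ℤ))
    (n d : ℕ) (hdn : d ≤ n)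
    (V : Submodule K (Fin n → K)) (hV : Module.finrank K ↥V = d) :
    ∃ g : Matrix (Fin n) (Fin n) K,
      (∀ i j, 0 ≤ v (g i j)) ∧ v g.det = 0 ∧
        g.mulVec '' {x : Fin n → K | ∀ j : Fin n, d ≤ (j : ℕ) → x j = 0} =
          (V : Set (Fin n → K)) := by
  classical
  set O := Odef v hv0 hvmul hvadd with hOdef
  haveI hpid : IsPrincipalIdealRing ↥O := Odef_pid v hv0 hvmul hvadd
  -- the inclusion O^n → K^n
  let ι : (Fin n → ↥O) →ₗ[↥O] (Fin n → K) :=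
    { toFun := fun x j => (x j : K)
      map_add' := by intro x y; funext j; push_cast; rfl
      map_smul' := by
        intro c x
        funext j
        show (((c • x) j : ↥O) : K) = c • ((x j : ↥O) : K)
        rw [Pi.smul_apply, smul_eq_mul, Algebra.smul_def (A := K)]
        push_cast
        rfl }
  have hι : Function.Injective ι := by
    intro x y hxy
    funext j
    have := congrFun hxy j
    exact Subtype.ext this
  let N : Submodule ↥O (Fin n → ↥O) := (V.restrictScalars ↥O).comap ι
  obtain ⟨r, snf⟩ := N.smithNormalForm (Pi.basisFun ↥O (Fin n))
  let ℓ : ↥N →ₗ[↥O] (Fin n → K) := ι.comp N.subtype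
  have halg : ∀ c : ↥O, (algebraMap ↥O K) c = (c : K) := fun c => rfl
  let w : Fin r → (Fin n → K) := fun i => ℓ (snf.bN i)
  -- w is O-linearly independent, hence K-linearly independent
  have hwO : LinearIndependent ↥O w := by
    have h1 : Function.Injective ℓ := hι.comp N.injective_subtype
    have := snf.bN.linearIndependent.map' ℓ (LinearMap.ker_eq_bot.mpr h1)
    exact this
  have hwK : LinearIndependent K w :=
    LinearIndependent.localization K (nonZeroDivisors ↥O) hwO
  -- w members lie in V
  have hwV : ∀ i, w i ∈ V := fun i => (snf.bN i).2
  -- span of w is V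
  have hsp : Submodule.span K (Set.range w) = V := by
    apply le_antisymm
    · rw [Submodule.span_le, Set.range_subset_iff]
      exact hwV
    · intro x hx
      obtain ⟨b, hb⟩ := IsLocalization.exist_integer_multiples_of_finite
        (nonZeroDivisors ↥O) (S := K) x
      choose y hy using hb
      have hbK : ((b : ↥O) : K) ≠ 0 := by
        have := nonZeroDivisors.coe_ne_zero b
        simpa [ZeroMemClass.coe_eq_zero] using this
      have hyN : y ∈ N := by
        show ι y ∈ V.restrictScalars ↥O
        have hιy : ι y = (b : ↥O) • x := by
          funext j
          show ((y j : ↥O) : K) = ((b : ↥O) • x) j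
          rw [Pi.smul_apply, ← hy j, halg]
        rw [hιy]
        exact Submodule.smul_of_tower_mem _ _ hx
      have hrepr := snf.bN.sum_repr ⟨y, hyN⟩
      have hbx : ((b : ↥O) : K) • x ∈ Submodule.span K (Set.range w) := by
        have hℓ : ℓ (⟨y, hyN⟩ : N) = ((b : ↥O) : K) • x := by
          show ι y = _
          funext j
          show ((y j : ↥O) : K) = (((b : ↥O) : K) • x) j
          rw [Pi.smul_apply, smul_eq_mul, ← halg ((b : ↥O)), ← Algebra.smul_def, ← hy j]
          exact (halg _).symm
        rw [← hℓ, ← hrepr, map_sum]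
        apply Submodule.sum_mem
        intro i _
        rw [map_smul]
        exact Submodule.smul_of_tower_mem _ _ (Submodule.subset_span ⟨i, rfl⟩)
      have : x = ((b : ↥O) : K)⁻¹ • (((b : ↥O) : K) • x) := by
        rw [smul_smul, inv_mul_cancel₀ hbK, one_smul]
      rw [this]
      exact Submodule.smul_mem _ _ hbx
  -- r = d
  have hrd : r = d := by
    have h1 : Module.finrank K ↥(Submodule.span K (Set.range w)) = r := by
      rw [finrank_span_eq_card hwK, Fintype.card_fin]
    rw [hsp, hV] at h1
    exact h1.symm
  subst hrd
  -- construct the permutation σ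
  let pivot : Finset (Fin n) := Finset.univ.map snf.f
  have hpc : pivot.card = r := by simp [pivot]
  have hfc : pivotᶜ.card = n - r := by
    rw [Finset.card_compl, hpc, Fintype.card_fin]
  let eo := pivotᶜ.orderIsoOfFin hfc
  let σf : Fin n → Fin n := fun j =>
    if h : (j : ℕ) < r then snf.f ⟨(j : ℕ), h⟩
    else (eo ⟨(j : ℕ) - r, by have := j.isLt; omega⟩ : Fin n)
  have heo_not : ∀ z, ((eo z : Fin n)) ∉ pivot := fun z => (Finset.mem_compl.mp (eo z).2)
  have hσinj : Function.Injective σf := by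
    intro j1 j2 h
    simp only [σf] at h
    by_cases h1 : (j1 : ℕ) < r <;> by_cases h2 : (j2 : ℕ) < r
    · rw [dif_pos h1, dif_pos h2] at h
      have h3 := congrArg Fin.val (snf.f.injective h)
      simp only at h3
      exact Fin.ext h3
    · rw [dif_pos h1, dif_neg h2] at h
      exact absurd (h ▸ Finset.mem_map_of_mem _ (Finset.mem_univ _)) (heo_not _)
    · rw [dif_neg h1, dif_pos h2] at h
      exact absurd (h ▸ Finset.mem_map_of_mem _ (Finset.mem_univ _)) (heo_not _)
    · rw [dif_neg h1, dif_neg h2] at h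
      have h3 := congrArg Fin.val (eo.injective (Subtype.ext h))
      simp only at h3
      have hj1 := j1.isLt
      have hj2 := j2.isLt
      exact Fin.ext (by omega)
  let σ : Equiv.Perm (Fin n) :=
    Equiv.ofBijective σf ((Fintype.bijective_iff_injective_and_card σf).mpr ⟨hσinj, rfl⟩)
  have hσ1 : ∀ i : Fin r, σ (Fin.castLE hdn i) = snf.f i := by
    intro i
    show σf _ = _
    have hi : ((Fin.castLE hdn i : Fin n) : ℕ) < r := i.isLt
    simp only [σf]
    rw [dif_pos hi]
    congr 1
  -- the matrix g
  let g : Matrix (Fin n) (Fin n) K := Matrix.of fun i j => ((snf.bM (σ j) : Fin n → ↥O) i : K)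
  refine ⟨g, fun i j => ((snf.bM (σ j)) i).2, ?_, ?_⟩
  · -- determinant has valuation zero
    let Amat : Matrix (Fin n) (Fin n) ↥O := Matrix.of fun i j => (snf.bM (σ j)) i
    have hg : g = Amat.map (algebraMap ↥O K) := rfl
    have hdet : IsUnit Amat.det := by
      have hmat : Amat = (Pi.basisFun ↥O (Fin n)).toMatrix ⇑(snf.bM.reindex σ.symm) := by
        ext i j
        simp [Module.Basis.toMatrix_apply, Module.Basis.reindex_apply, Amat]
      rw [hmat, ← Module.Basis.det_apply]
      exact (Pi.basisFun ↥O (Fin n)).isUnit_det _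
    obtain ⟨u, hu⟩ := hdet
    have hgdet : g.det = ((Amat.det : ↥O) : K) := by
      have h2 : Amat.map (algebraMap ↥O K) = (algebraMap ↥O K).mapMatrix Amat := rfl
      rw [hg, h2, ← RingHom.map_det, halg]
    have huv : v ((u.val : ↥O) : K) + v ((u.inv : ↥O) : K) = 0 := by
      rw [← hvmul]
      have : ((u.val : ↥O) : K) * ((u.inv : ↥O) : K) = ((u.val * u.inv : ↥O) : K) := by push_cast; rfl
      rw [this, u.val_inv]
      push_cast
      exact hv_one v hv0 hvmul
    have h1 : 0 ≤ v ((u.val : ↥O) : K) := (u.val).2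
    have h2 : 0 ≤ v ((u.inv : ↥O) : K) := (u.inv).2
    have hval : v ((u.val : ↥O) : K) = 0 := by
      apply le_antisymm _ h1
      calc v ((u.val : ↥O) : K) = v ((u.val : ↥O) : K) + 0 := by rw [add_zero]
        _ ≤ v ((u.val : ↥O) : K) + v ((u.inv : ↥O) : K) := by exact add_le_add le_rfl h2
        _ = 0 := huv
    rw [hgdet, ← hu, hval]
  · -- image equality
    have ha0 : ∀ i : Fin r, ((snf.a i : ↥O) : K) ≠ 0 := by
      intro i hai
      have hai' : snf.a i = 0 := by exact_mod_cast hai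
      have h1 := snf.snf i
      rw [hai', zero_smul] at h1
      exact snf.bN.ne_zero i (Subtype.ext h1)
    let colK : Fin r → (Fin n → K) := fun i => ι (snf.bM (snf.f i))
    have hw_col : ∀ i, w i = ((snf.a i : ↥O) : K) • colK i := by
      intro i
      have h1 : w i = ι (snf.a i • snf.bM (snf.f i)) := by
        show ι ((snf.bN i : Fin n → ↥O)) = _
        rw [snf.snf i]
      rw [h1, map_smul, ← algebraMap_smul K (snf.a i) (colK i), halg]
    have hcol_mem : ∀ i, colK i ∈ V := by
      intro i
      have : colK i = ((snf.a i : ↥O) : K)⁻¹ • w i := by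
        rw [hw_col i, smul_smul, inv_mul_cancel₀ (ha0 i), one_smul]
      rw [this]
      exact Submodule.smul_mem _ _ (hwV i)
    have hsp2 : Submodule.span K (Set.range colK) = V := by
      apply le_antisymm
      · rw [Submodule.span_le, Set.range_subset_iff]
        exact hcol_mem
      · rw [← hsp, Submodule.span_le, Set.range_subset_iff]
        intro i
        rw [hw_col i]
        exact Submodule.smul_mem _ _ (Submodule.subset_span ⟨i, rfl⟩)
    have hmv : ∀ y : Fin n → K, (∀ j : Fin n, r ≤ (j : ℕ) → y j = 0) →
        g.mulVec y = ∑ i : Fin r, y (Fin.castLE hdn i) • colK i := by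
      intro y hy0
      funext k
      show ∑ j : Fin n, g k j * y j = _
      rw [Finset.sum_apply]
      rw [← Finset.sum_subset (Finset.subset_univ (Finset.univ.map (Fin.castLEEmb hdn)))]
      · rw [Finset.sum_map]
        refine Finset.sum_congr rfl fun i _ => ?_
        have h1 : g k (Fin.castLEEmb hdn i) = colK i k := by
          show ((snf.bM (σ (Fin.castLE hdn i)) : Fin n → ↥O) k : K) = _
          rw [hσ1 i]
          rfl
        rw [h1, Pi.smul_apply, smul_eq_mul, mul_comm]
        rfl
      · intro j _ hj
        have hjr : r ≤ (j : ℕ) := by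
          by_contra hc
          push_neg at hc
          exact hj (Finset.mem_map.mpr ⟨⟨(j : ℕ), hc⟩, Finset.mem_univ _, Fin.ext rfl⟩)
        rw [hy0 j hjr, mul_zero]
    ext x
    constructor
    · rintro ⟨y, hy, rfl⟩
      rw [hmv y hy]
      exact Submodule.sum_mem _ fun i _ => Submodule.smul_mem _ _ (hcol_mem i)
    · intro hx
      have hx' : x ∈ Submodule.span K (Set.range colK) := by rw [hsp2]; exact hx
      obtain ⟨c, hc⟩ := (Submodule.mem_span_range_iff_exists_fun K).mp hx'
      refine ⟨fun (j : Fin n) => if h : (j : ℕ) < r then c ⟨(j : ℕ), h⟩ else 0, ?_, ?_⟩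
      · intro j hj
        exact dif_neg (not_lt.mpr hj)
      · rw [hmv _ (fun j hj => dif_neg (not_lt.mpr hj))]
        rw [← hc]
        refine Finset.sum_congr rfl fun i _ => ?_
        have h1 : ((Fin.castLE hdn i : Fin n) : ℕ) < r := i.isLt
        show (if h : _ then c ⟨((Fin.castLE hdn i : Fin n) : ℕ), h⟩ else 0) • colK i = c i • colK i
        rw [dif_pos h1]
        congr 1
end

section
/- Let K be a field with surjective discrete valuation v : Kˣ → ℤ, let e ≥ 1, and let Λ be a subgroup of Kˣ with v(Λ) = eℤ. Let Π be a subspace of K^n, let X ⊆ Π satisfy λ·X = X for all λ ∈ Λ, and let π : K^n → K^m be a K-linear map whose restriction to Π is injective. For 0 ≤ i ≤ e−1 set A_i = {λ·π(x) : λ ∈ Λ, x ∈ X \ {0}, v(x) = i}. Then π(X) \ {0} is the union of A_0, …, A_{e−1}, and the sets A_0, …, A_{e−1} are pairwise disjoint. -/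
open Pointwise

lemma vmin_smul' {K : Type*} [Field K] (v : K → WithTop ℤ)
    (hvmul : ∀ a b : K, v (a * b) = v a + v b) {n : ℕ} (c : K) (x : Fin n → K) :
    vmin v (c • x) = v c + vmin v x := by
  unfold vmin
  have H : ∀ s : Finset (Fin n), (s.inf fun j => v ((c • x) j)) = v c + s.inf fun j => v (x j) := by
    intro s
    induction s using Finset.induction_on with
    | empty => simp
    | insert _ _ h ih =>
      rw [Finset.inf_insert, Finset.inf_insert, ih]
      simp only [Pi.smul_apply, smul_eq_mul, hvmul]
      rw [min_add_add_left]
  exact H _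

lemma vmin_eq_top' {K : Type*} [Field K] (v : K → WithTop ℤ) (hv0 : ∀ a : K, v a = ⊤ ↔ a = 0)
    {n : ℕ} (x : Fin n → K) : vmin v x = ⊤ ↔ x = 0 := by
  unfold vmin
  simp [Finset.inf_eq_top_iff, hv0, funext_iff]

/-- Let `K` be a field with surjective discrete valuation `v`, `e ≥ 1`, and
`Λ ≤ Kˣ` a subgroup with `v(Λ) = eℤ`. Let `Π ⊆ K^n` be a subspace, `X ⊆ Π` a `Λ`-cone
(`λ·X = X` for all `λ ∈ Λ`), and `π : K^n → K^m` a `K`-linear map injective on `Π`. For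
`0 ≤ i ≤ e−1` let `A_i = {λ·π(x) : λ ∈ Λ, x ∈ X \ {0}, v x = i}`. Then
`π(X) \ {0} = A_0 ∪ ⋯ ∪ A_{e−1}`, and the `A_i` are pairwise disjoint. -/
theorem image_cone_eq_disjoint_union {K : Type*} [Field K] (v : K → WithTop ℤ)
    (hv0 : ∀ a : K, v a = ⊤ ↔ a = 0)
    (hvmul : ∀ a b : K, v (a * b) = v a + v b)
    (hvadd : ∀ a b : K, min (v a) (v b) ≤ v (a + b))
    (hvsurj : ∀ k : ℤ, ∃ a : K, v a = (k : WithTop ℤ))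
    (e : ℕ) (he : 1 ≤ e)
    (Λ : Subgroup Kˣ)
    (hΛ : ∀ k : ℤ, (∃ lam ∈ Λ, v ((lam : Kˣ) : K) = (k : WithTop ℤ)) ↔ (e : ℤ) ∣ k)
    (n m : ℕ) (P : Submodule K (Fin n → K))
    (X : Set (Fin n → K)) (hXP : X ⊆ (P : Set (Fin n → K)))
    (hXcone : ∀ lam ∈ Λ, ((lam : Kˣ) : K) • X = X)
    (π : (Fin n → K) →ₗ[K] (Fin m → K)) (hπ : Set.InjOn π (P : Set (Fin n → K)))
    (A : ℕ → Set (Fin m → K))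
    (hA : ∀ i : ℕ, A i = {y : Fin m → K | ∃ lam ∈ Λ, ∃ x ∈ X,
      x ≠ 0 ∧ vmin v x = ((i : ℤ) : WithTop ℤ) ∧ y = ((lam : Kˣ) : K) • π x}) :
    ((π '' X) \ {0} = ⋃ i ∈ Finset.range e, A i) ∧
      ∀ i < e, ∀ j < e, i ≠ j → Disjoint (A i) (A j) := by
  -- basic facts about v
  have hv1 : v (1 : K) = 0 := by
    have h := hvmul 1 1
    rw [one_mul] at h
    have hne : v (1 : K) ≠ ⊤ := by simp [hv0]
    obtain ⟨d, hd⟩ := WithTop.ne_top_iff_exists.mp hne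
    rw [← hd] at h ⊢
    have : d = d + d := by exact_mod_cast h
    have : d = 0 := by omega
    simp [this]
  have hunit : ∀ u : Kˣ, ∃ d : ℤ, v ((u : Kˣ) : K) = (d : WithTop ℤ) := by
    intro u
    have hne : v ((u : Kˣ) : K) ≠ ⊤ := by simp [hv0, u.ne_zero]
    obtain ⟨d, hd⟩ := WithTop.ne_top_iff_exists.mp hne
    exact ⟨d, hd.symm⟩
  have hvinv : ∀ (u : Kˣ) (d : ℤ), v ((u : Kˣ) : K) = (d : WithTop ℤ) →
      v (((u⁻¹ : Kˣ) : K)) = ((-d : ℤ) : WithTop ℤ) := by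
    intro u d hd
    obtain ⟨d', hd'⟩ := hunit u⁻¹
    have h : v (((u⁻¹ : Kˣ) : K) * (u : K)) = v (1 : K) := by
      rw [← Units.val_mul, inv_mul_cancel, Units.val_one]
    rw [hvmul, hd, hd', hv1] at h
    have : d' + d = 0 := by exact_mod_cast h
    rw [hd']
    congr 1
    omega
  -- scaled elements stay in X
  have hsmulX : ∀ lam ∈ Λ, ∀ x ∈ X, ((lam : Kˣ) : K) • x ∈ X := by
    intro lam hlam x hx
    rw [← hXcone lam hlam]
    exact Set.smul_mem_smul_set hx
  constructor
  · ext y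
    simp only [Set.mem_diff, Set.mem_image, Set.mem_singleton_iff, Set.mem_iUnion,
      Finset.mem_range, exists_prop]
    constructor
    · rintro ⟨⟨x, hxX, rfl⟩, hy0⟩
      have hx0 : x ≠ 0 := by rintro rfl; simp at hy0
      have hfin : vmin v x ≠ ⊤ := fun h => hx0 ((vmin_eq_top' v hv0 x).mp h)
      obtain ⟨d, hd⟩ := WithTop.ne_top_iff_exists.mp hfin
      obtain ⟨lam, hlam, hvlam⟩ := (hΛ ((e : ℤ) * (d / e))).mpr ⟨d / e, rfl⟩
      set x' := ((lam⁻¹ : Kˣ) : K) • x with hx'def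
      have hx'X : x' ∈ X := hsmulX lam⁻¹ (inv_mem hlam) x hxX
      have hx'0 : x' ≠ 0 := smul_ne_zero (Units.ne_zero _) hx0
      have hvx' : vmin v x' = ((d - e * (d / e) : ℤ) : WithTop ℤ) := by
        rw [hx'def, vmin_smul' v hvmul, hvinv lam _ hvlam, ← hd, ← WithTop.coe_add]
        congr 1
        omega
      set r : ℤ := d % e with hr
      have hre : d - (e : ℤ) * (d / e) = r := by rw [hr, Int.emod_def]
      have hr0 : 0 ≤ r := Int.emod_nonneg d (by positivity)
      have hrlt : r < e := Int.emod_lt_of_pos d (by positivity)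
      refine ⟨r.toNat, by omega, ?_⟩
      rw [hA]
      refine ⟨lam, hlam, x', hx'X, hx'0, ?_, ?_⟩
      · rw [hvx', hre]; congr 1; omega
      · rw [hx'def, map_smul, smul_smul, Units.mul_inv, one_smul]
    · rintro ⟨i, hi, hyA⟩
      rw [hA i] at hyA
      obtain ⟨lam, hlam, x, hxX, hx0, hvx, rfl⟩ := hyA
      have hπx0 : π x ≠ 0 := by
        intro h
        exact hx0 (hπ (hXP hxX) (Submodule.zero_mem P) (by simp [h]))
      refine ⟨⟨((lam : Kˣ) : K) • x, hsmulX lam hlam x hxX, (map_smul π _ x)⟩, ?_⟩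
      simp [smul_eq_zero, Units.ne_zero, hπx0]
  · intro i hi j hj hij
    rw [Set.disjoint_left]
    intro y hyi hyj
    rw [hA i] at hyi
    rw [hA j] at hyj
    obtain ⟨lam₁, h1, x₁, hx₁, hx₁0, hv₁, hy₁⟩ := hyi
    obtain ⟨lam₂, h2, x₂, hx₂, hx₂0, hv₂, hy₂⟩ := hyj
    have heq : ((lam₁ : Kˣ) : K) • x₁ = ((lam₂ : Kˣ) : K) • x₂ := by
      apply hπ (hXP (hsmulX lam₁ h1 x₁ hx₁)) (hXP (hsmulX lam₂ h2 x₂ hx₂))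
      rw [map_smul, map_smul, ← hy₁, ← hy₂]
    obtain ⟨d₁, hd₁⟩ := hunit lam₁
    obtain ⟨d₂, hd₂⟩ := hunit lam₂
    have ediv₁ : (e : ℤ) ∣ d₁ := (hΛ d₁).mp ⟨lam₁, h1, hd₁⟩
    have ediv₂ : (e : ℤ) ∣ d₂ := (hΛ d₂).mp ⟨lam₂, h2, hd₂⟩
    have hvv : vmin v (((lam₁ : Kˣ) : K) • x₁) = vmin v (((lam₂ : Kˣ) : K) • x₂) := by
      rw [heq]
    rw [vmin_smul' v hvmul, vmin_smul' v hvmul, hd₁, hd₂, hv₁, hv₂,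
      ← WithTop.coe_add, ← WithTop.coe_add] at hvv
    have hZ : d₁ + (i : ℤ) = d₂ + (j : ℤ) := by exact_mod_cast hvv
    have hdd : (e : ℤ) ∣ ((j : ℤ) - (i : ℤ)) := by
      obtain ⟨a, ha⟩ := ediv₁
      obtain ⟨b, hb⟩ := ediv₂
      exact ⟨a - b, by rw [mul_sub, ← ha, ← hb]; omega⟩
    have habs : |((j : ℤ) - (i : ℤ))| < (e : ℤ) := by
      rw [abs_lt]; omega
    have := Int.eq_zero_of_abs_lt_dvd hdd habs
    omega
end

section
/- Let p be a prime, n ≥ 1, e ≥ 1, and let μ be the Haar measure on ℚ_p^n normalized so that μ(ℤ_p^n) = 1. For x ∈ ℚ_p^n \ {0} let v(x) = min_j v_p(x_j), and set B(0,i) = {x ∈ ℚ_p^n : v(x) ≥ i} and S(0,i) = {x ∈ ℚ_p^n \ {0} : v(x) = i}. Let X ⊆ ℚ_p^n be a measurable set with p^e · X = X. Then: (a) μ(X ∩ B(0, m+e)) = p^{−ne} · μ(X ∩ B(0,m)) for every m ∈ ℤ, so the quantity p^{nm} μ(X ∩ B(0,m)) depends only on m modulo e; and (b) (1/e) · Σ_{i=0}^{e−1}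 p^{ni} μ(X ∩ B(0,i)) = (1/(e(1 − p^{−n}))) · Σ_{i=0}^{e−1} p^{ni} μ(X ∩ S(0,i)). -/
open MeasureTheory Pointwise ENNReal

lemma padic_norm_sub_le_max {p : ℕ} [hp : Fact p.Prime] (a b : ℚ_[p]) :
    ‖a - b‖ ≤ max ‖a‖ ‖b‖ := by
  simpa [sub_eq_add_neg] using Padic.nonarchimedean a (-b)

/-- Unique residue: every `y ∈ ℤ_p` is within `p^{-e}` of a unique natural `< p^e`. -/
lemma padic_appr_existsUnique {p : ℕ} [hp : Fact p.Prime] (e : ℕ) (y : ℚ_[p]) (hy : ‖y‖ ≤ 1) :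
    ∃! a : Fin (p ^ e), ‖y - ((a : ℕ) : ℚ_[p])‖ ≤ (p : ℝ) ^ (-(e : ℤ)) := by
  set z : ℤ_[p] := ⟨y, hy⟩ with hz
  have ha : ‖y - ((z.appr e : ℕ) : ℚ_[p])‖ ≤ (p : ℝ) ^ (-(e : ℤ)) := by
    have h1 : ‖z - ((z.appr e : ℕ) : ℤ_[p])‖ ≤ (p : ℝ) ^ (-(e : ℤ)) :=
      (PadicInt.norm_le_pow_iff_mem_span_pow _ e).2 (PadicInt.appr_spec e z)
    have h2 : ((z - ((z.appr e : ℕ) : ℤ_[p]) : ℤ_[p]) : ℚ_[p]) = y - ((z.appr e : ℕ) : ℚ_[p]) := by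
      push_cast [hz]; rfl
    rw [← h2, ← PadicInt.norm_def]; exact h1
  refine ⟨⟨z.appr e, PadicInt.appr_lt z e⟩, ha, ?_⟩
  rintro b hb
  have key : ‖((((b : ℕ) : ℤ) - ((z.appr e : ℕ) : ℤ) : ℤ) : ℚ_[p])‖ ≤ (p : ℝ) ^ (-(e : ℤ)) := by
    have heq : ((((b : ℕ) : ℤ) - ((z.appr e : ℕ) : ℤ) : ℤ) : ℚ_[p]) =
        (y - ((z.appr e : ℕ) : ℚ_[p])) - (y - ((b : ℕ) : ℚ_[p])) := by push_cast; ring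
    rw [heq]
    exact le_trans (padic_norm_sub_le_max _ _) (max_le ha hb)
  have hdvd : ((p : ℤ) ^ e) ∣ (((b : ℕ) : ℤ) - ((z.appr e : ℕ) : ℤ)) := by
    exact_mod_cast (Padic.norm_int_le_pow_iff_dvd _ e).1 (by exact_mod_cast key)
  have hzero : (((b : ℕ) : ℤ) - ((z.appr e : ℕ) : ℤ)) = 0 := by
    refine Int.eq_zero_of_abs_lt_dvd hdvd ?_
    have h1 : ((b : ℕ) : ℤ) < (p : ℤ) ^ e := by exact_mod_cast b.isLt
    have h2 : ((z.appr e : ℕ) : ℤ) < (p : ℤ) ^ e := by exact_mod_cast PadicInt.appr_lt z e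
    have h3 : (0 : ℤ) ≤ ((b : ℕ) : ℤ) := Int.natCast_nonneg _
    have h4 : (0 : ℤ) ≤ ((z.appr e : ℕ) : ℤ) := Int.natCast_nonneg _
    rw [abs_sub_lt_iff]; omega
  have hbv : (b : ℕ) = z.appr e := by omega
  exact Fin.ext (by simpa using hbv)

lemma padic_ball_closed {p : ℕ} [hp : Fact p.Prime] {n : ℕ} (r : ℝ) :
    IsClosed {x : Fin n → ℚ_[p] | ∀ j, ‖x j‖ ≤ r} := by
  have : {x : Fin n → ℚ_[p] | ∀ j, ‖x j‖ ≤ r} = ⋂ j, {x | ‖x j‖ ≤ r} := by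
    ext x; simp
  rw [this]
  exact isClosed_iInter fun j => isClosed_le (by fun_prop) continuous_const

/-- Scaling a measurable set by `c ≠ 0` multiplies Haar measure by `μ (c • K)` where
`K` is the unit polydisk (assuming `μ K = 1`). -/
lemma padic_haar_smul {p : ℕ} [hp : Fact p.Prime] {n : ℕ}
    [MeasurableSpace (Fin n → ℚ_[p])] [BorelSpace (Fin n → ℚ_[p])]
    (μ : Measure (Fin n → ℚ_[p])) [μ.IsAddHaarMeasure]
    (hμ1 : μ {x : Fin n → ℚ_[p] | ∀ j, ‖x j‖ ≤ 1} = 1)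
    (c : ℚ_[p]) (hc : c ≠ 0) {A : Set (Fin n → ℚ_[p])} (hA : MeasurableSet A) :
    μ (c • A) = μ (c • {x : Fin n → ℚ_[p] | ∀ j, ‖x j‖ ≤ 1}) * μ A := by
  set u : ℚ_[p]ˣ := Units.mk0 c hc with hu
  set ψ := DistribMulAction.toAddEquiv (Fin n → ℚ_[p]) u⁻¹ with hψ
  have hψc : Continuous ψ := by
    have : ⇑ψ = fun x : Fin n → ℚ_[p] => u⁻¹ • x := rfl
    rw [this]; exact continuous_const_smul _
  have hψc' : Continuous ψ.symm := by
    have : ⇑ψ.symm = fun x : Fin n → ℚ_[p] => u • x := rfl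
    rw [this]; exact continuous_const_smul _
  set ν := μ.map ψ with hν
  have : ν.IsAddHaarMeasure := AddEquiv.isAddHaarMeasure_map μ ψ hψc hψc'
  have hmap : ∀ (A : Set (Fin n → ℚ_[p])), MeasurableSet A → ν A = μ (c • A) := by
    intro A hA
    rw [hν, Measure.map_apply hψc.measurable hA]
    congr 1
    have : ⇑ψ = fun x : Fin n → ℚ_[p] => u⁻¹ • x := rfl
    rw [this, Set.preimage_smul, inv_inv]
    norm_cast
  have huniq := Measure.isAddLeftInvariant_eq_smul ν μ
  have hKmeas : MeasurableSet {x : Fin n → ℚ_[p] | ∀ j, ‖x j‖ ≤ 1} :=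
    (padic_ball_closed 1).measurableSet
  have hk : μ (c • {x : Fin n → ℚ_[p] | ∀ j, ‖x j‖ ≤ 1})
      = (ν.addHaarScalarFactor μ : ℝ≥0∞) := by
    have h2 := congrArg (fun m : Measure (Fin n → ℚ_[p]) => m {x : Fin n → ℚ_[p] | ∀ j, ‖x j‖ ≤ 1}) huniq
    simp only [Measure.smul_apply, smul_eq_mul] at h2
    rw [← hmap _ hKmeas, h2, hμ1]
    simp [ENNReal.smul_def]
  have h3 := congrArg (fun m : Measure (Fin n → ℚ_[p]) => m A) huniq
  simp only [Measure.smul_apply, smul_eq_mul] at h3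
  rw [← hmap A hA, h3, hk]
  simp [ENNReal.smul_def]

lemma padic_ball_closed' {p : ℕ} [hp : Fact p.Prime] {n : ℕ} (r : ℝ) (v : Fin n → ℚ_[p]) :
    IsClosed {x : Fin n → ℚ_[p] | ∀ j, ‖x j - v j‖ ≤ r} := by
  have : {x : Fin n → ℚ_[p] | ∀ j, ‖x j - v j‖ ≤ r} = ⋂ j, {x | ‖x j - v j‖ ≤ r} := by
    ext x; simp
  rw [this]
  exact isClosed_iInter fun j => isClosed_le (by fun_prop) continuous_const


lemma padic_unit_ball_measure {p : ℕ} [hp : Fact p.Prime] {n : ℕ}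
    [MeasurableSpace (Fin n → ℚ_[p])] [BorelSpace (Fin n → ℚ_[p])]
    (μ : Measure (Fin n → ℚ_[p])) [μ.IsAddHaarMeasure]
    (hμ1 : μ {x : Fin n → ℚ_[p] | ∀ j, ‖x j‖ ≤ 1} = 1) (e : ℕ) :
    μ {x : Fin n → ℚ_[p] | ∀ j, ‖x j‖ ≤ (p : ℝ) ^ (-(e : ℤ))} = ((p : ℝ≥0∞) ^ (n * e))⁻¹ := by
  have hp1 : 1 < p := hp.out.one_lt
  set Be := {x : Fin n → ℚ_[p] | ∀ j, ‖x j‖ ≤ (p : ℝ) ^ (-(e : ℤ))} with hBe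
  set v : (Fin n → Fin (p ^ e)) → (Fin n → ℚ_[p]) := fun a j => ((a j : ℕ) : ℚ_[p]) with hv
  set T : (Fin n → Fin (p ^ e)) → Set (Fin n → ℚ_[p]) := fun a => v a +ᵥ Be with hT
  have hre1 : (p : ℝ) ^ (-(e : ℤ)) ≤ 1 := by
    rw [zpow_neg, zpow_natCast]
    apply inv_le_one_of_one_le₀
    exact one_le_pow₀ (by exact_mod_cast hp1.le)
  have hTmem : ∀ a x, x ∈ T a ↔ ∀ j, ‖x j - v a j‖ ≤ (p : ℝ) ^ (-(e : ℤ)) := by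
    intro a x
    rw [hT]
    simp only [Set.mem_vadd_set_iff_neg_vadd_mem]
    constructor
    · intro h j
      have := h j
      simpa [neg_add_eq_sub] using this
    · intro h j
      simpa [neg_add_eq_sub] using h j
  have hTK : ∀ a, T a ⊆ {x : Fin n → ℚ_[p] | ∀ j, ‖x j‖ ≤ 1} := by
    intro a x hx j
    have h1 : ‖x j - v a j‖ ≤ 1 := le_trans ((hTmem a x).1 hx j) hre1
    have h2 : ‖v a j‖ ≤ 1 := by
      have : v a j = (((a j : ℕ) : ℤ) : ℚ_[p]) := by push_cast; rfl
      rw [this]; exact Padic.norm_int_le_one _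
    calc ‖x j‖ = ‖(x j - v a j) + v a j‖ := by ring_nf
      _ ≤ max ‖x j - v a j‖ ‖v a j‖ := Padic.nonarchimedean _ _
      _ ≤ 1 := max_le h1 h2
  have hcover : {x : Fin n → ℚ_[p] | ∀ j, ‖x j‖ ≤ 1} = ⋃ a, T a := by
    apply Set.Subset.antisymm
    · intro x hx
      choose a ha using fun j => (padic_appr_existsUnique e (x j) (hx j)).exists
      exact Set.mem_iUnion.2 ⟨a, (hTmem a x).2 ha⟩
    · exact Set.iUnion_subset hTK
  have hdisj : Pairwise (Function.onFun Disjoint T) := by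
    intro a b hab
    rw [Function.onFun, Set.disjoint_left]
    intro x hxa hxb
    apply hab
    funext j
    have h1 := (hTmem a x).1 hxa j
    have h2 := (hTmem b x).1 hxb j
    have hx1 : ‖x j‖ ≤ 1 := hTK a hxa j
    obtain ⟨c, hc, hcu⟩ := padic_appr_existsUnique e (x j) hx1
    exact (hcu (a j) h1).trans (hcu (b j) h2).symm
  have hTmeas : ∀ a, MeasurableSet (T a) := by
    intro a
    have : T a = {x : Fin n → ℚ_[p] | ∀ j, ‖x j - v a j‖ ≤ (p : ℝ) ^ (-(e : ℤ))} := by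
      ext x; exact hTmem a x
    rw [this]
    exact (padic_ball_closed' _ _).measurableSet
  have hsum : μ {x : Fin n → ℚ_[p] | ∀ j, ‖x j‖ ≤ 1} = ∑' a, μ (T a) := by
    rw [hcover]
    exact measure_iUnion hdisj hTmeas
  have hTμ : ∀ a, μ (T a) = μ Be := fun a => measure_vadd μ (v a) Be
  have hcard : (Fintype.card (Fin n → Fin (p ^ e)) : ℝ≥0∞) = (p : ℝ≥0∞) ^ (n * e) := by
    simp only [Fintype.card_fun, Fintype.card_fin]
    push_cast
    rw [← pow_mul, mul_comm]
  have hkey : (p : ℝ≥0∞) ^ (n * e) * μ Be = 1 := by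
    rw [← hcard, ← hμ1, hsum, tsum_fintype]
    simp [hTμ, Finset.sum_const, mul_comm]
  have hne0 : ((p : ℝ≥0∞) ^ (n * e)) ≠ 0 := by positivity
  have hnetop : ((p : ℝ≥0∞) ^ (n * e)) ≠ ⊤ := by
    exact ENNReal.pow_ne_top (ENNReal.natCast_ne_top p)
  calc μ Be = (((p : ℝ≥0∞) ^ (n * e))⁻¹ * ((p : ℝ≥0∞) ^ (n * e))) * μ Be := by
        rw [ENNReal.inv_mul_cancel hne0 hnetop, one_mul]
    _ = ((p : ℝ≥0∞) ^ (n * e))⁻¹ * ((p : ℝ≥0∞) ^ (n * e) * μ Be) := by ring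
    _ = ((p : ℝ≥0∞) ^ (n * e))⁻¹ := by rw [hkey, mul_one]

section Main

variable {p : ℕ} [hp : Fact p.Prime] {n : ℕ}
  [MeasurableSpace (Fin n → ℚ_[p])] [BorelSpace (Fin n → ℚ_[p])]

theorem padic_cone_density_ball_sphere' (p : ℕ) [hp : Fact p.Prime] (n e : ℕ)
    (hn : 1 ≤ n) (he : 1 ≤ e)
    [MeasurableSpace (Fin n → ℚ_[p])] [BorelSpace (Fin n → ℚ_[p])]
    (μ : MeasureTheory.Measure (Fin n → ℚ_[p])) [μ.IsAddHaarMeasure]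
    (hμ1 : μ {x : Fin n → ℚ_[p] | ∀ j, ‖x j‖ ≤ 1} = 1)
    (X : Set (Fin n → ℚ_[p])) (hXmeas : MeasurableSet X)
    (hXcone : ((p : ℚ_[p]) ^ e) • X = X)
    (B : ℤ → Set (Fin n → ℚ_[p]))
    (hB : ∀ m : ℤ, B m = {x : Fin n → ℚ_[p] | ∀ j, ‖x j‖ ≤ (p : ℝ) ^ (-m)})
    (S : ℤ → Set (Fin n → ℚ_[p]))
    (hS : ∀ i : ℤ, S i = {x : Fin n → ℚ_[p] |
      x ≠ 0 ∧ (∀ j, ‖x j‖ ≤ (p : ℝ) ^ (-i)) ∧ ∃ j, ‖x j‖ = (p : ℝ) ^ (-i)}) :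
    (∀ m : ℤ, μ (X ∩ B (m + e)) = ((p : ℝ≥0∞) ^ (n * e))⁻¹ * μ (X ∩ B m)) ∧
    (∀ m m' : ℤ, m % (e : ℤ) = m' % (e : ℤ) →
      (p : ℝ≥0∞) ^ ((n : ℤ) * m) * μ (X ∩ B m) =
        (p : ℝ≥0∞) ^ ((n : ℤ) * m') * μ (X ∩ B m')) ∧
    (1 / (e : ℝ≥0∞)) * ∑ i ∈ Finset.range e, (p : ℝ≥0∞) ^ (n * i) * μ (X ∩ B (i : ℤ)) =
      (1 / ((e : ℝ≥0∞) * (1 - ((p : ℝ≥0∞) ^ n)⁻¹))) *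
        ∑ i ∈ Finset.range e, (p : ℝ≥0∞) ^ (n * i) * μ (X ∩ S (i : ℤ)) := by
  have hp1 : 1 < p := hp.out.one_lt
  have hpR : (1 : ℝ) < p := by exact_mod_cast hp1
  have hpR0 : (0 : ℝ) < p := lt_trans one_pos hpR
  have hpe0 : ((p : ℚ_[p]) ^ e) ≠ 0 := by
    apply pow_ne_zero
    exact_mod_cast hp.out.ne_zero ∘ (by exact_mod_cast ·)
  -- basic measurability
  have hBmeas : ∀ m : ℤ, MeasurableSet (B m) := by
    intro m; rw [hB]; exact (padic_ball_closed _).measurableSet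
  have hBK : B 0 = {x : Fin n → ℚ_[p] | ∀ j, ‖x j‖ ≤ 1} := by
    rw [hB]; norm_num
  -- scaling of balls
  have hsmulB : ∀ m : ℤ, ((p : ℚ_[p]) ^ e) • B m = B (m + e) := by
    intro m
    ext x
    rw [Set.mem_smul_set_iff_inv_smul_mem₀ hpe0, hB, hB]
    simp only [Set.mem_setOf_eq, Pi.smul_apply, smul_eq_mul]
    have hnormpe : ‖((p : ℚ_[p]) ^ e)⁻¹‖ = (p : ℝ) ^ (e : ℤ) := by
      rw [norm_inv, Padic.norm_p_pow, ← zpow_neg, neg_neg]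
    have hiff : ∀ t : ℝ, 0 ≤ t → ((p : ℝ) ^ (e : ℤ) * t ≤ (p : ℝ) ^ (-m) ↔
        t ≤ (p : ℝ) ^ (-(m + (e : ℤ)))) := by
      intro t ht
      rw [← le_div_iff₀' (by positivity)]
      have : (p : ℝ) ^ (-(m + (e : ℤ))) = (p : ℝ) ^ (-m) / (p : ℝ) ^ (e : ℤ) := by
        rw [div_eq_mul_inv, ← zpow_neg, ← zpow_add₀ (ne_of_gt hpR0)]
        ring_nf
      rw [this]
    constructor
    · intro h j
      have := h j
      rw [norm_mul, hnormpe] at this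
      exact (hiff ‖x j‖ (norm_nonneg _)).1 this
    · intro h j
      rw [norm_mul, hnormpe]
      exact (hiff ‖x j‖ (norm_nonneg _)).2 (h j)
  have hBe : μ (B (e : ℤ)) = ((p : ℝ≥0∞) ^ (n * e))⁻¹ := by
    rw [hB]
    exact padic_unit_ball_measure μ hμ1 e
  have hpK : μ (((p : ℚ_[p]) ^ e) • {x : Fin n → ℚ_[p] | ∀ j, ‖x j‖ ≤ 1})
      = ((p : ℝ≥0∞) ^ (n * e))⁻¹ := by
    rw [← hBK, hsmulB 0, zero_add, hBe]
  -- part (a)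
  have parta : ∀ m : ℤ, μ (X ∩ B (m + e)) = ((p : ℝ≥0∞) ^ (n * e))⁻¹ * μ (X ∩ B m) := by
    intro m
    have h1 : X ∩ B (m + e) = ((p : ℚ_[p]) ^ e) • (X ∩ B m) := by
      rw [Set.smul_set_inter₀ hpe0, hXcone, hsmulB m]
    rw [h1, padic_haar_smul μ hμ1 _ hpe0 (hXmeas.inter (hBmeas m)), hpK]
  -- ENNReal facts
  have hpE0 : (p : ℝ≥0∞) ≠ 0 := by exact_mod_cast hp.out.ne_zero
  have hpEtop : (p : ℝ≥0∞) ≠ ⊤ := ENNReal.natCast_ne_top p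
  have hne0 : ((p : ℝ≥0∞) ^ (n * e)) ≠ 0 := pow_ne_zero _ hpE0
  have hnetop : ((p : ℝ≥0∞) ^ (n * e)) ≠ ⊤ := ENNReal.pow_ne_top hpEtop
  -- part (a2): periodicity
  set f : ℤ → ℝ≥0∞ := fun m => (p : ℝ≥0∞) ^ ((n : ℤ) * m) * μ (X ∩ B m) with hf
  have hfper : ∀ m : ℤ, f (m + e) = f m := by
    intro m
    show (p : ℝ≥0∞) ^ ((n : ℤ) * (m + e)) * μ (X ∩ B (m + e))
      = (p : ℝ≥0∞) ^ ((n : ℤ) * m) * μ (X ∩ B m)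
    rw [parta m]
    have hexp : (n : ℤ) * (m + e) = (n : ℤ) * m + ((n * e : ℕ) : ℤ) := by push_cast; ring
    rw [hexp, ENNReal.zpow_add hpE0 hpEtop, zpow_natCast]
    rw [mul_assoc, ← mul_assoc ((p : ℝ≥0∞) ^ (n * e)),
      ENNReal.mul_inv_cancel hne0 hnetop, one_mul]
  have hfadd : ∀ (k : ℕ) (m : ℤ), f (m + (e : ℤ) * (k : ℤ)) = f m := by
    intro k
    induction k with
    | zero => simp
    | succ k ih =>
      intro m
      have : m + (e : ℤ) * ((k + 1 : ℕ) : ℤ) = (m + (e : ℤ) * (k : ℤ)) + e := by push_cast; ring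
      rw [this, hfper, ih]
  have hmod : ∀ m m' : ℤ, m % (e : ℤ) = m' % (e : ℤ) → f m = f m' := by
    have key : ∀ m m' : ℤ, m ≤ m' → m % (e : ℤ) = m' % (e : ℤ) → f m' = f m := by
      intro m m' hle h
      have hdvd : (e : ℤ) ∣ (m' - m) := by
        apply Int.dvd_of_emod_eq_zero
        rw [Int.sub_emod, h, sub_self, Int.zero_emod]
      obtain ⟨k, hk⟩ := hdvd
      have hek : (0 : ℤ) < e := by exact_mod_cast he
      have hk0 : 0 ≤ k := by
        by_contra hneg
        push_neg at hneg
        have : (e : ℤ) * k < 0 := mul_neg_of_pos_of_neg hek hneg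
        omega
      lift k to ℕ using hk0 with k'
      have hm' : m' = m + (e : ℤ) * (k' : ℤ) := by linarith [hk]
      rw [hm']
      exact hfadd k' m
    intro m m' h
    rcases le_total m m' with hle | hle
    · exact (key m m' hle h).symm
    · exact key m' m hle h.symm
  refine ⟨parta, hmod, ?_⟩
  -- part (b)
  have hBsub : ∀ i : ℤ, B (i + 1) ⊆ B i := by
    intro i x hx
    rw [hB] at hx ⊢
    intro j
    exact le_trans (hx j) (zpow_le_zpow_right₀ hpR.le (by omega))
  have hSdiff : ∀ i : ℤ, S i = B i \ B (i + 1) := by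
    intro i
    rw [hS, hB, hB]
    ext x
    simp only [Set.mem_setOf_eq, Set.mem_diff]
    constructor
    · rintro ⟨hx0, hxle, j, hj⟩
      refine ⟨hxle, fun hc => ?_⟩
      have h1 := hc j
      rw [hj] at h1
      have h2 : (p : ℝ) ^ (-(i + 1)) < (p : ℝ) ^ (-i) :=
        (zpow_lt_zpow_iff_right₀ hpR).2 (by omega)
      linarith
    · rintro ⟨hxle, hnc⟩
      push_neg at hnc
      obtain ⟨j, hj⟩ := hnc
      have hxj0 : x j ≠ 0 := by
        intro h
        rw [h, norm_zero] at hj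
        have : (0 : ℝ) < (p : ℝ) ^ (-(i + 1)) := by positivity
        linarith
      have hval : ‖x j‖ = (p : ℝ) ^ (-(x j).valuation) := Padic.norm_eq_zpow_neg_valuation hxj0
      have hub : -(x j).valuation ≤ -i := by
        have := hxle j
        rw [hval] at this
        exact (zpow_le_zpow_iff_right₀ hpR).1 this
      have hlb : -(i + 1) < -(x j).valuation := by
        rw [hval] at hj
        exact (zpow_lt_zpow_iff_right₀ hpR).1 hj
      have hveq : (x j).valuation = i := by omega
      refine ⟨fun h => hxj0 (by rw [h]; rfl), hxle, j, ?_⟩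
      rw [hval, hveq]
  have hsplit : ∀ i : ℤ, μ (X ∩ B i) = μ (X ∩ S i) + μ (X ∩ B (i + 1)) := by
    intro i
    have hset : X ∩ B i = (X ∩ S i) ∪ (X ∩ B (i + 1)) := by
      rw [hSdiff, ← Set.inter_union_distrib_left, Set.diff_union_of_subset (hBsub i)]
    rw [hset, measure_union ?_ (hXmeas.inter (hBmeas (i + 1)))]
    exact Set.disjoint_of_subset Set.inter_subset_right Set.inter_subset_right
      (by rw [hSdiff]; exact Set.disjoint_sdiff_left)
  -- finiteness
  have hμfin : ∀ i : ℕ, μ (X ∩ B (i : ℤ)) ≤ 1 := by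
    intro i
    have hsub : B (i : ℤ) ⊆ B 0 := by
      intro x hx
      rw [hB] at hx ⊢
      intro j
      exact le_trans (hx j) (zpow_le_zpow_right₀ hpR.le (by omega))
    calc μ (X ∩ B (i : ℤ)) ≤ μ (B 0) := measure_mono (le_trans Set.inter_subset_right hsub)
      _ = 1 := by rw [hBK, hμ1]
  set c : ℝ≥0∞ := ((p : ℝ≥0∞) ^ n)⁻¹ with hc
  set G : ℕ → ℝ≥0∞ := fun i => (p : ℝ≥0∞) ^ (n * i) * μ (X ∩ B (i : ℤ)) with hG
  have hGfin : ∀ i : ℕ, G i ≠ ⊤ := by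
    intro i
    apply ne_of_lt
    calc G i ≤ (p : ℝ≥0∞) ^ (n * i) * 1 :=
          mul_le_mul_right (hμfin i) _
      _ < ⊤ := by rw [mul_one]; exact (ENNReal.pow_ne_top hpEtop).lt_top
  have hGrec : ∀ i : ℕ, G i = (p : ℝ≥0∞) ^ (n * i) * μ (X ∩ S (i : ℤ)) + c * G (i + 1) := by
    intro i
    have hcast : ((i : ℤ) + 1) = ((i + 1 : ℕ) : ℤ) := by push_cast; ring
    rw [hG]
    show (p : ℝ≥0∞) ^ (n * i) * μ (X ∩ B (i : ℤ)) = _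
    rw [hsplit (i : ℤ), mul_add, hcast]
    congr 1
    show (p : ℝ≥0∞) ^ (n * i) * μ (X ∩ B ((i + 1 : ℕ) : ℤ))
      = c * ((p : ℝ≥0∞) ^ (n * (i + 1)) * μ (X ∩ B ((i + 1 : ℕ) : ℤ)))
    have hpow : (p : ℝ≥0∞) ^ (n * (i + 1)) = (p : ℝ≥0∞) ^ n * (p : ℝ≥0∞) ^ (n * i) := by
      rw [← pow_add]; ring_nf
    rw [hc, hpow, ← mul_assoc, ← mul_assoc, ENNReal.inv_mul_cancel (pow_ne_zero _ hpE0)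
      (ENNReal.pow_ne_top hpEtop), one_mul]
  have hG0e : G e = G 0 := by
    rw [hG]
    show (p : ℝ≥0∞) ^ (n * e) * μ (X ∩ B (e : ℤ)) = (p : ℝ≥0∞) ^ (n * 0) * μ (X ∩ B (0 : ℤ))
    have h0 : ((0 : ℤ) + (e : ℤ)) = (e : ℤ) := by ring
    have := parta 0
    rw [h0] at this
    rw [this, ← mul_assoc, ENNReal.mul_inv_cancel hne0 hnetop, one_mul]
    norm_num
  have hshift : ∑ i ∈ Finset.range e, G (i + 1) = ∑ i ∈ Finset.range e, G i := by
    have h1 := Finset.sum_range_succ' G e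
    have h2 := Finset.sum_range_succ G e
    rw [h2, hG0e] at h1
    have := h1.symm
    rwa [add_comm (∑ i ∈ Finset.range e, G i) (G 0),
      add_comm (∑ x ∈ Finset.range e, G (x + 1)) (G 0),
      ENNReal.add_right_inj (hG0e ▸ hGfin e)] at this
  set Bsum := ∑ i ∈ Finset.range e, G i with hBsum
  set Ssum := ∑ i ∈ Finset.range e, (p : ℝ≥0∞) ^ (n * i) * μ (X ∩ S (i : ℤ)) with hSsum
  have hBS : Bsum = Ssum + c * Bsum := by
    rw [hBsum, hSsum]
    calc ∑ i ∈ Finset.range e, G i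
        = ∑ i ∈ Finset.range e, ((p : ℝ≥0∞) ^ (n * i) * μ (X ∩ S (i : ℤ)) + c * G (i + 1)) := by
          exact Finset.sum_congr rfl fun i _ => hGrec i
      _ = (∑ i ∈ Finset.range e, (p : ℝ≥0∞) ^ (n * i) * μ (X ∩ S (i : ℤ)))
          + c * ∑ i ∈ Finset.range e, G (i + 1) := by
          rw [Finset.sum_add_distrib, Finset.mul_sum]
      _ = _ := by rw [hshift]
  have hBsumfin : Bsum ≠ ⊤ := by
    rw [hBsum]
    apply ne_of_lt
    rw [ENNReal.sum_lt_top]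
    exact fun i _ => (hGfin i).lt_top
  have hc1 : c < 1 := by
    rw [hc, ENNReal.inv_lt_one]
    apply one_lt_pow₀ _ (by omega)
    exact_mod_cast hp1
  have h1c0 : (1 - c) ≠ 0 := by
    rw [← tsub_pos_iff_lt] at hc1
    exact hc1.ne'
  have h1ctop : (1 - c) ≠ ⊤ := by
    apply ne_of_lt
    exact lt_of_le_of_lt tsub_le_self one_lt_top
  have hSB : Ssum = (1 - c) * Bsum := by
    have h1 : (1 - c) * Bsum = 1 * Bsum - c * Bsum :=
      ENNReal.sub_mul (fun _ _ => hBsumfin)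
    rw [h1, one_mul]
    symm
    apply ENNReal.sub_eq_of_eq_add _ hBS
    exact ne_top_of_le_ne_top hBsumfin (by
      calc c * Bsum ≤ 1 * Bsum := mul_le_mul_left hc1.le _
        _ = Bsum := one_mul _)
  have he0 : (e : ℝ≥0∞) ≠ 0 := by exact_mod_cast Nat.one_le_iff_ne_zero.mp he
  have hetop : (e : ℝ≥0∞) ≠ ⊤ := ENNReal.natCast_ne_top e
  show (1 / (e : ℝ≥0∞)) * Bsum = (1 / ((e : ℝ≥0∞) * (1 - c))) * Ssum
  rw [one_div, one_div, ENNReal.mul_inv (Or.inl he0) (Or.inr h1c0), hSB,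
    mul_assoc, ← mul_assoc (1 - c)⁻¹, ENNReal.inv_mul_cancel h1c0 h1ctop, one_mul]

end Main

/-- Let `p` be prime, `n, e ≥ 1`, and `μ` the Haar measure on `ℚ_p^n`
normalized so `μ(ℤ_p^n) = 1`. Let `B(0,m)` be the ball of valuative radius `m` around `0`
and `S(0,i)` the sphere `{x ≠ 0 : v(x) = i}` (with `v` the minimum of the coordinate
`p`-adic valuations, expressed via norms). If `X ⊆ ℚ_p^n` is measurable with `p^e·X = X`,
then:
(a) `μ(X ∩ B(0,m+e)) = p^{−ne} μ(X ∩ B(0,m))` for all `m ∈ ℤ`, so `p^{nm} μ(X ∩ B(0,m))`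
depends only on `m` modulo `e`; and
(b) `(1/e) Σ_{i=0}^{e−1} p^{ni} μ(X ∩ B(0,i))
      = (1/(e(1−p^{−n}))) Σ_{i=0}^{e−1} p^{ni} μ(X ∩ S(0,i))`. -/
theorem padic_cone_density_ball_sphere (p : ℕ) [hp : Fact p.Prime] (n e : ℕ)
    (hn : 1 ≤ n) (he : 1 ≤ e)
    [MeasurableSpace (Fin n → ℚ_[p])] [BorelSpace (Fin n → ℚ_[p])]
    (μ : Measure (Fin n → ℚ_[p])) [μ.IsAddHaarMeasure]
    (hμ1 : μ {x : Fin n → ℚ_[p] | ∀ j, ‖x j‖ ≤ 1} = 1)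
    (X : Set (Fin n → ℚ_[p])) (hXmeas : MeasurableSet X)
    (hXcone : ((p : ℚ_[p]) ^ e) • X = X)
    (B : ℤ → Set (Fin n → ℚ_[p]))
    (hB : ∀ m : ℤ, B m = {x : Fin n → ℚ_[p] | ∀ j, ‖x j‖ ≤ (p : ℝ) ^ (-m)})
    (S : ℤ → Set (Fin n → ℚ_[p]))
    (hS : ∀ i : ℤ, S i = {x : Fin n → ℚ_[p] |
      x ≠ 0 ∧ (∀ j, ‖x j‖ ≤ (p : ℝ) ^ (-i)) ∧ ∃ j, ‖x j‖ = (p : ℝ) ^ (-i)}) :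
    (∀ m : ℤ, μ (X ∩ B (m + e)) = ((p : ℝ≥0∞) ^ (n * e))⁻¹ * μ (X ∩ B m)) ∧
    (∀ m m' : ℤ, m % (e : ℤ) = m' % (e : ℤ) →
      (p : ℝ≥0∞) ^ ((n : ℤ) * m) * μ (X ∩ B m) =
        (p : ℝ≥0∞) ^ ((n : ℤ) * m') * μ (X ∩ B m')) ∧
    (1 / (e : ℝ≥0∞)) * ∑ i ∈ Finset.range e, (p : ℝ≥0∞) ^ (n * i) * μ (X ∩ B (i : ℤ)) =
      (1 / ((e : ℝ≥0∞) * (1 - ((p : ℝ≥0∞) ^ n)⁻¹))) *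
        ∑ i ∈ Finset.range e, (p : ℝ≥0∞) ^ (n * i) * μ (X ∩ S (i : ℤ)) :=
  padic_cone_density_ball_sphere' p n e hn he μ hμ1 X hXmeas hXcone B hB S hS
end
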